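/- Let K, K₀ ∈ 𝒦^{n*} and let r = d_H(K,K₀) be their Hausdorff distance. Then δ^l(K) ≤ (1+r)^{2n}·δ^l(K₀). -/

import Mathlib

open Metric Set Pointwise MeasureTheory Filter ENNReal

lemma aux_incl {E : Type*} [NormedAddCommGroup E] [NormedSpace ℝ E]
    {A B : Set E} {r : ℝ} (hr0 : 0 ≤ r) (hBc : IsCompact B) (hBne : B.Nonempty)
    (hBl : closedBall (0 : E) 1 ⊆ B) (hBconv : Convex ℝ B)
    (hfin : EMetric.hausdorffEdist A B ≠ ⊤) (hdist : hausdorffDist A B ≤ r) :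
    A ⊆ (1 + r) • B := by
  intro x hx
  obtain ⟨y, hy, hyd⟩ := hBc.exists_infDist_eq_dist hBne x
  have h1 : dist x y ≤ r := by
    rw [← hyd]; exact le_trans (infDist_le_hausdorffDist_of_mem hx hfin) hdist
  have hball : closedBall (0 : E) r ⊆ r • B := by
    rcases eq_or_lt_of_le hr0 with h | h
    · rw [← h, closedBall_zero, zero_smul_set hBne]
      exact subset_rfl
    · have : r • closedBall (0 : E) 1 = closedBall 0 r := by
        rw [smul_closedBall' h.ne' (0 : E) 1, smul_zero, Real.norm_of_nonneg hr0, mul_one]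
      rw [← this]
      exact Set.smul_set_mono hBl
  have hmem : x - y ∈ r • B := hball (by rwa [mem_closedBall_zero_iff, ← dist_eq_norm])
  have heq : (1 + r) • B = B + r • B := by
    rw [hBconv.add_smul zero_le_one hr0, one_smul]
  rw [heq]
  have : y + (x - y) = x := by abel
  exact this ▸ Set.add_mem_add hy hmem

lemma aux_smul_vadd {E : Type*} [NormedAddCommGroup E] [NormedSpace ℝ E]
    (c : ℝ) (a : E) (s : Set E) : c • (a +ᵥ s) = (c • a) +ᵥ (c • s) := by
  ext z
  simp only [Set.mem_smul_set, Set.mem_vadd_set, vadd_eq_add]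
  constructor
  · rintro ⟨w, ⟨u, hu, rfl⟩, rfl⟩
    exact ⟨c • u, ⟨u, hu, rfl⟩, by rw [smul_add]⟩
  · rintro ⟨w, ⟨u, hu, rfl⟩, rfl⟩
    exact ⟨a + u, ⟨u, hu, rfl⟩, by rw [smul_add]⟩


/-- The lattice packing density `δ^l(K)`:
`sup {vol(K)/det Λ : Λ a lattice in ℝⁿ such that the translates K + λ (λ ∈ Λ) have pairwise
disjoint interiors}`, where a lattice is the set of integer linear combinations of a basis of
`ℝⁿ`, and its covolume `det Λ` is the volume of a fundamental parallelepiped. -/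
noncomputable def deltaL (n : ℕ) (K : Set (EuclideanSpace ℝ (Fin n))) : ℝ≥0∞ :=
  ⨆ (b : Module.Basis (Fin n) ℝ (EuclideanSpace ℝ (Fin n)))
    (_ : ((Submodule.span ℤ (Set.range ⇑b) : Submodule ℤ (EuclideanSpace ℝ (Fin n))) :
        Set (EuclideanSpace ℝ (Fin n))).Pairwise
        fun v w => interior (v +ᵥ K) ∩ interior (w +ᵥ K) = ∅),
    volume K / volume (ZSpan.fundamentalDomain b)

/-- Let `K, K₀ ∈ 𝒦^{n*}` and let `r = d_H(K, K₀)` be their Hausdorff distance.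
Then `δ^l(K) ≤ (1+r)^{2n} · δ^l(K₀)`. -/
theorem stmt_5 (n : ℕ) (hn : 1 ≤ n) (K K₀ : Set (EuclideanSpace ℝ (Fin n)))
    (hKcomp : IsCompact K) (hKconv : Convex ℝ K) (hKint : (interior K).Nonempty)
    (hK₀comp : IsCompact K₀) (hK₀conv : Convex ℝ K₀) (hK₀int : (interior K₀).Nonempty)
    (hKl : closedBall (0 : EuclideanSpace ℝ (Fin n)) 1 ⊆ K) (hKu : K ⊆ closedBall 0 n)
    (hK₀l : closedBall (0 : EuclideanSpace ℝ (Fin n)) 1 ⊆ K₀) (hK₀u : K₀ ⊆ closedBall 0 n)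
    (r : ℝ) (hr : r = hausdorffDist K K₀) :
    deltaL n K ≤ ENNReal.ofReal ((1 + r) ^ (2 * n)) * deltaL n K₀ := by
  have hr0 : 0 ≤ r := hr ▸ hausdorffDist_nonneg
  set c : ℝ := 1 + r with hc_def
  have hc0 : 0 < c := by positivity
  have hcn0 : 0 < c ^ n := by positivity
  have hne : K.Nonempty := ⟨0, hKl (mem_closedBall_self zero_le_one)⟩
  have hne₀ : K₀.Nonempty := ⟨0, hK₀l (mem_closedBall_self zero_le_one)⟩
  have hfin : EMetric.hausdorffEdist K K₀ ≠ ⊤ :=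
    hausdorffEdist_ne_top_of_nonempty_of_bounded hne hne₀ hKcomp.isBounded hK₀comp.isBounded
  have hKK₀ : K ⊆ c • K₀ :=
    aux_incl hr0 hK₀comp hne₀ hK₀l hK₀conv hfin hr.ge
  have hK₀K : K₀ ⊆ c • K := by
    refine aux_incl hr0 hKcomp hne hKl hKconv ?_ ?_
    · convert hfin using 1; exact EMetric.hausdorffEdist_comm
    · rw [hausdorffDist_comm, ← hr]
  -- unfold the sup
  rw [deltaL]
  refine iSup₂_le fun b hb => ?_
  -- scaled basis
  set f : EuclideanSpace ℝ (Fin n) ≃ₗ[ℝ] EuclideanSpace ℝ (Fin n) := LinearEquiv.smulOfNeZero ℝ (EuclideanSpace ℝ (Fin n)) c hc0.ne' with hf_def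
  have hf_apply : ∀ x : EuclideanSpace ℝ (Fin n), f x = c • x := fun x => rfl
  set b' : Module.Basis (Fin n) ℝ (EuclideanSpace ℝ (Fin n)) := b.map f with hb'_def
  -- the lattice of b' is c • lattice of b
  have hspan : ((Submodule.span ℤ (Set.range ⇑b') : Submodule ℤ (EuclideanSpace ℝ (Fin n))) : Set (EuclideanSpace ℝ (Fin n)))
      = c • ((Submodule.span ℤ (Set.range ⇑b) : Submodule ℤ (EuclideanSpace ℝ (Fin n))) : Set (EuclideanSpace ℝ (Fin n))) := by
    have hrange : Set.range ⇑b' = ⇑(f.restrictScalars ℤ).toLinearMap '' Set.range ⇑b := by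
      ext x
      simp [hb'_def, Module.Basis.map_apply, Set.range_comp]
    rw [hrange, ← Submodule.map_span, Submodule.map_coe]
    ext x
    simp [Set.mem_smul_set, hf_apply]
  -- packing for K₀ with lattice of b'
  have hb' : ((Submodule.span ℤ (Set.range ⇑b') : Submodule ℤ (EuclideanSpace ℝ (Fin n))) : Set (EuclideanSpace ℝ (Fin n))).Pairwise
      fun v w => interior (v +ᵥ K₀) ∩ interior (w +ᵥ K₀) = ∅ := by
    intro x hx y hy hxy
    rw [hspan] at hx hy
    obtain ⟨x₀, hx₀, rfl⟩ := hx
    obtain ⟨y₀, hy₀, rfl⟩ := hy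
    have hxy₀ : x₀ ≠ y₀ := fun h => hxy (by rw [h])
    have key := hb hx₀ hy₀ hxy₀
    have hsub : ∀ z : EuclideanSpace ℝ (Fin n), z ∈ ((Submodule.span ℤ (Set.range ⇑b) : Submodule ℤ (EuclideanSpace ℝ (Fin n))) : Set (EuclideanSpace ℝ (Fin n))) →
        interior ((c • z) +ᵥ K₀) ⊆ c • interior (z +ᵥ K) := by
      intro z _
      have h1 : (c • z) +ᵥ K₀ ⊆ c • (z +ᵥ K) := by
        rw [aux_smul_vadd]
        exact Set.vadd_set_mono hK₀K
      refine (interior_mono h1).trans ?_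
      rw [interior_smul₀ hc0.ne']
    rw [Set.eq_empty_iff_forall_notMem]
    rintro z ⟨hz1, hz2⟩
    simp only [] at hz1 hz2
    have h1 := hsub x₀ hx₀ hz1
    have h2 := hsub y₀ hy₀ hz2
    rw [Set.mem_smul_set_iff_inv_smul_mem₀ hc0.ne'] at h1 h2
    have : c⁻¹ • z ∈ interior (x₀ +ᵥ K) ∩ interior (y₀ +ᵥ K) := ⟨h1, h2⟩
    rw [key] at this
    exact this
  -- fundamental domain
  have hFD : ZSpan.fundamentalDomain b' = c • ZSpan.fundamentalDomain b := by
    rw [hb'_def, ← ZSpan.map_fundamentalDomain]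
    ext x
    simp [Set.mem_smul_set, hf_apply]
  set D := volume (ZSpan.fundamentalDomain b) with hD_def
  have hD0 : D ≠ 0 := ZSpan.measure_fundamentalDomain_ne_zero b
  have hDtop : D ≠ ⊤ := (ZSpan.fundamentalDomain_isBounded b).measure_lt_top.ne
  set a : ℝ≥0∞ := ENNReal.ofReal (c ^ n) with ha_def
  have ha0 : a ≠ 0 := ne_of_gt (ENNReal.ofReal_pos.mpr hcn0)
  have hatop : a ≠ ⊤ := ENNReal.ofReal_ne_top
  have hFDvol : volume (ZSpan.fundamentalDomain b') = a * D := by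
    rw [hFD, Measure.addHaar_smul, finrank_euclideanSpace_fin,
      abs_of_pos hcn0]
  have hKvol : volume K ≤ a * volume K₀ := by
    calc volume K ≤ volume (c • K₀) := measure_mono hKK₀
      _ = a * volume K₀ := by
        rw [Measure.addHaar_smul, finrank_euclideanSpace_fin, abs_of_pos hcn0]
  -- compare with the term for b' in deltaL n K₀
  have hterm : volume K₀ / volume (ZSpan.fundamentalDomain b') ≤ deltaL n K₀ := by
    rw [deltaL]
    exact le_iSup_of_le b' (le_iSup_of_le hb' le_rfl)
  refine le_trans ?_ (mul_le_mul_right hterm _)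
  rw [hFDvol]
  have hofReal : ENNReal.ofReal ((1 + r) ^ (2 * n)) = a * a := by
    rw [ha_def, ← ENNReal.ofReal_mul (le_of_lt hcn0), ← pow_add]
    norm_num [two_mul, hc_def]
  rw [hofReal]
  have harith : a * a * (volume K₀ / (a * D)) = a * volume K₀ / D := by
    rw [div_eq_mul_inv, div_eq_mul_inv, ENNReal.mul_inv (Or.inl ha0) (Or.inl hatop)]
    calc a * a * (volume K₀ * (a⁻¹ * D⁻¹))
        = (a * a⁻¹) * (a * volume K₀ * D⁻¹) := by ring
      _ = a * volume K₀ * D⁻¹ := by rw [ENNReal.mul_inv_cancel ha0 hatop, one_mul]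
  rw [harith]
  exact ENNReal.div_le_div_right hKvol D
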